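/- Let f be a real polynomial of degree n ≥ 2 with only real roots, and let x_0 ≥ x_1 ≥ … ≥ x_{n-1} be real numbers such that f^{(ν)}(x_ν) = 0 and f(x_ν) = 0 for each ν = 0,1,…,n−1 (a non-increasing sequence of common roots of f and its derivatives). Then f is trivial, i.e., f(x) = a(x − b)^n. -/

import Mathlib

open Polynomial

private lemma aux_calc (r : ℝ) (Q : ℝ[X]) (y : ℝ) :
    (derivative ((X - C r) * Q)).eval y ^ 2 -
      ((X - C r) * Q).eval y * (derivative (derivative ((X - C r) * Q))).eval y
      = Q.eval y ^ 2 + (y - r) ^ 2 *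
        ((derivative Q).eval y ^ 2 - Q.eval y * (derivative (derivative Q)).eval y) := by
  have h1 : derivative ((X - C r) * Q) = Q + (X - C r) * derivative Q := by
    rw [derivative_mul, derivative_X_sub_C, one_mul]
  rw [h1, derivative_add, derivative_mul, derivative_X_sub_C, one_mul]
  simp only [eval_add, eval_mul, eval_sub, eval_X, eval_C]
  ring

private lemma key_nonneg (a y : ℝ) (M : Multiset ℝ) :
    0 ≤ (derivative (C a * (M.map fun r => X - C r).prod)).eval y ^ 2 -
        (C a * (M.map fun r => X - C r).prod).eval y *
          (derivative (derivative (C a * (M.map fun r => X - C r).prod))).eval y := by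
  induction M using Multiset.induction_on with
  | empty => simp
  | cons r M ih =>
    have hrw : C a * (((r ::ₘ M)).map fun s => X - C s).prod
        = (X - C r) * (C a * (M.map fun s => X - C s).prod) := by
      rw [Multiset.map_cons, Multiset.prod_cons]; ring
    rw [hrw, aux_calc]
    have h2 := sq_nonneg ((C a * (M.map fun s => X - C s).prod).eval y)
    have h3 := mul_nonneg (sq_nonneg (y - r)) ih
    linarith

private lemma key_strict (a y : ℝ) (M : Multiset ℝ) (hM : M ≠ 0)
    (hne : (C a * (M.map fun r => X - C r).prod).eval y ≠ 0) :
    0 < (derivative (C a * (M.map fun r => X - C r).prod)).eval y ^ 2 -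
        (C a * (M.map fun r => X - C r).prod).eval y *
          (derivative (derivative (C a * (M.map fun r => X - C r).prod))).eval y := by
  obtain ⟨r, hr⟩ := Multiset.exists_mem_of_ne_zero hM
  obtain ⟨M', rfl⟩ := Multiset.exists_cons_of_mem hr
  have hrw : C a * (((r ::ₘ M')).map fun s => X - C s).prod
      = (X - C r) * (C a * (M'.map fun s => X - C s).prod) := by
    rw [Multiset.map_cons, Multiset.prod_cons]; ring
  rw [hrw] at hne ⊢
  have hQy : (C a * (M'.map fun s => X - C s).prod).eval y ≠ 0 := by
    intro h
    apply hne
    rw [eval_mul, h, mul_zero]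
  rw [aux_calc]
  have h1 : 0 < (C a * (M'.map fun s => X - C s).prod).eval y ^ 2 := by positivity
  have h3 := mul_nonneg (sq_nonneg (y - r)) (key_nonneg a y M')
  linarith

private lemma no_flat {g : ℝ[X]} (hcard : g.roots.card = g.natDegree) (hd : g.natDegree ≠ 0)
    {y : ℝ} (h0 : g.eval y ≠ 0) (h1 : (derivative g).eval y = 0)
    (h2 : (derivative (derivative g)).eval y = 0) : False := by
  have hg0 : g ≠ 0 := fun h => hd (by rw [h, natDegree_zero])
  have hsp : g.Splits := splits_iff_card_roots.mpr hcard
  have hprod := hsp.eq_prod_roots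
  have hM : g.roots ≠ 0 := by
    intro h
    rw [h] at hcard
    simp at hcard
    omega
  have hkey := key_strict g.leadingCoeff y g.roots hM (by rw [← hprod]; exact h0)
  rw [← hprod] at hkey
  rw [h1, h2] at hkey
  nlinarith [hkey]

private lemma iter_facts {f : ℝ[X]} {n : ℕ} (hdeg : f.natDegree = n) (hreal : f.roots.card = n) :
    ∀ s, s ≤ n → (derivative^[s] f).natDegree = n - s ∧ (derivative^[s] f).roots.card = n - s := by
  intro s
  induction s with
  | zero => intro _; simpa using ⟨hdeg, hreal⟩
  | succ s ih =>
    intro hs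
    obtain ⟨hd, hc⟩ := ih (by omega)
    have hpos : 0 < (derivative^[s] f).natDegree := by omega
    have hdd : (derivative (derivative^[s] f)).natDegree = n - (s + 1) := by
      have h := natDegree_eq_of_degree_eq_some (degree_derivative_eq _ hpos)
      rw [hd] at h
      omega
    have hge := card_roots_le_derivative (derivative^[s] f)
    have hle := card_roots' (derivative (derivative^[s] f))
    rw [Function.iterate_succ_apply']
    constructor
    · exact hdd
    · omega

private lemma mult_down {f : ℝ[X]} {n : ℕ} (hdeg : f.natDegree = n) (hreal : f.roots.card = n) :
    ∀ s, s ≤ n → ∀ y : ℝ, ∀ k, 2 ≤ k → k ≤ (derivative^[s] f).rootMultiplicity y →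
      k ≤ f.rootMultiplicity y := by
  intro s
  induction s with
  | zero => intro _ y k _ h; simpa using h
  | succ s ih =>
    intro hs y k hk2 hm
    rw [Function.iterate_succ_apply'] at hm
    have hd'ne : derivative (derivative^[s] f) ≠ 0 := by
      intro h
      rw [h, rootMultiplicity_zero] at hm
      omega
    have h1 : (derivative (derivative^[s] f)).eval y = 0 := by
      have := isRoot_iterate_derivative_of_lt_rootMultiplicity
        (p := derivative (derivative^[s] f)) (t := y) (n := 0) (by omega)
      simpa using this
    have h2 : (derivative (derivative (derivative^[s] f))).eval y = 0 := by
      have := isRoot_iterate_derivative_of_lt_rootMultiplicity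
        (p := derivative (derivative^[s] f)) (t := y) (n := 1) (by omega)
      simpa using this
    obtain ⟨hgd, hgc⟩ := iter_facts hdeg hreal s (by omega)
    have hg0 : derivative^[s] f ≠ 0 := fun h => by rw [h, natDegree_zero] at hgd; omega
    have hy : (derivative^[s] f).eval y = 0 := by
      by_contra hne
      exact no_flat (by rw [hgc, hgd]) (by omega) hne h1 h2
    have hder := derivative_rootMultiplicity_of_root (p := derivative^[s] f) (t := y) hy
    have hpos : 0 < (derivative^[s] f).rootMultiplicity y := (rootMultiplicity_pos hg0).mpr hy
    exact ih (by omega) y k hk2 (by omega)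

private lemma sum_coeff {q : ℝ[X]} (h0 : q.natDegree ≠ 0) (hc : q.roots.card = q.natDegree) :
    q.leadingCoeff * q.roots.sum = -q.coeff (q.natDegree - 1) := by
  have hq : q ≠ 0 := fun h => h0 (by rw [h, natDegree_zero])
  have ha : q.leadingCoeff ≠ 0 := leadingCoeff_ne_zero.mpr hq
  set m : ℝ[X] := q * C q.leadingCoeff⁻¹ with hm
  have hmon : m.Monic := monic_mul_leadingCoeff_inv hq
  have hroots : m.roots = q.roots := by
    rw [hm, mul_comm, roots_C_mul _ (inv_ne_zero ha)]
  have hdeg : m.natDegree = q.natDegree := natDegree_mul_C (inv_ne_zero ha)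
  have hsp : m.Splits := splits_iff_card_roots.mpr (by rw [hroots, hdeg, hc])
  have hnext := hsp.nextCoeff_eq_neg_sum_roots_of_monic hmon
  rw [nextCoeff_of_natDegree_pos (by omega), hroots, hdeg, hm, coeff_mul_C] at hnext
  have : q.coeff (q.natDegree - 1) = -q.roots.sum * q.leadingCoeff := by
    rw [← hnext]
    field_simp
  rw [this]
  ring

private lemma step_sum {p : ℝ[X]} {d : ℕ} (hd : p.natDegree = d) (h1 : 1 ≤ d)
    (hc : p.roots.card = d) :
    (d : ℝ) * (derivative p).roots.sum = ((d - 1 : ℕ) : ℝ) * p.roots.sum := by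
  have hp0 : p ≠ 0 := fun h => by rw [h, natDegree_zero] at hd; omega
  have ha : p.leadingCoeff ≠ 0 := leadingCoeff_ne_zero.mpr hp0
  have hdd : (derivative p).natDegree = d - 1 := by
    have h := natDegree_eq_of_degree_eq_some (degree_derivative_eq p (by omega))
    rw [hd] at h
    exact h
  have hgec := card_roots_le_derivative p
  have hlec := card_roots' (derivative p)
  have hdc : (derivative p).roots.card = d - 1 := by omega
  rcases eq_or_lt_of_le h1 with h | h
  · have hz : (derivative p).roots = 0 := by
      rw [← Multiset.card_eq_zero]
      omega
    rw [hz]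
    simp [← h]
  · have key1 := sum_coeff (q := p) (by omega) (by rw [hd, hc])
    rw [hd] at key1
    have key2 := sum_coeff (q := derivative p) (by omega) (by rw [hdd, hdc])
    rw [hdd] at key2
    have hcast1 : ((d - 1 : ℕ) : ℝ) + 1 = (d : ℝ) := by
      push_cast [Nat.cast_sub h1]
      ring
    have hcast2 : ((d - 1 - 1 : ℕ) : ℝ) + 1 = ((d - 1 : ℕ) : ℝ) := by
      have h2 : d - 1 - 1 + 1 = d - 1 := by omega
      rw [← h2]
      push_cast
      ring
    have hlc : (derivative p).leadingCoeff = p.leadingCoeff * (d : ℝ) := by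
      rw [leadingCoeff, hdd, coeff_derivative]
      have he : d - 1 + 1 = d := by omega
      rw [he, ← hd, coeff_natDegree, hd, hcast1]
    have hc2 : (derivative p).coeff (d - 1 - 1) = p.coeff (d - 1) * ((d - 1 : ℕ) : ℝ) := by
      rw [coeff_derivative]
      have he : d - 1 - 1 + 1 = d - 1 := by omega
      rw [he, hcast2]
    rw [hlc, hc2] at key2
    apply mul_left_cancel₀ ha
    linear_combination key2 - ((d - 1 : ℕ) : ℝ) * key1

theorem stmt_16 (n : ℕ) (hn : 2 ≤ n) (f : ℝ[X]) (hdeg : f.natDegree = n)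
    (hreal : f.roots.card = n) (x : ℕ → ℝ)
    (hmono : ∀ i j : ℕ, i ≤ j → j < n → x j ≤ x i)
    (hroots : ∀ ν < n, f.eval (x ν) = 0 ∧ (derivative^[ν] f).eval (x ν) = 0) :
    ∃ a b : ℝ, f = C a * (X - C b) ^ n := by
  classical
  have hf0 : f ≠ 0 := fun h => by rw [h, natDegree_zero] at hdeg; omega
  set T := (Finset.range n).image x with hT
  -- multiplicity lower bound on each fiber
  have claim1 : ∀ y ∈ T, ((Finset.range n).filter fun ν => x ν = y).card ≤ f.rootMultiplicity y := by
    intro y hy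
    set F := (Finset.range n).filter fun ν => x ν = y with hF
    have hFne : F.Nonempty := by
      obtain ⟨ν, hν, rfl⟩ := Finset.mem_image.mp hy
      exact ⟨ν, Finset.mem_filter.mpr ⟨hν, rfl⟩⟩
    set A := F.min' hFne with hA'
    set B := F.max' hFne with hB'
    have hA : A ∈ F := F.min'_mem hFne
    have hB : B ∈ F := F.max'_mem hFne
    have hAn : A < n := Finset.mem_range.mp (Finset.mem_filter.mp hA).1
    have hBn : B < n := Finset.mem_range.mp (Finset.mem_filter.mp hB).1
    have hxA : x A = y := (Finset.mem_filter.mp hA).2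
    have hxB : x B = y := (Finset.mem_filter.mp hB).2
    have hAB : A ≤ B := F.min'_le B hB
    have hFeq : F = Finset.Icc A B := by
      apply Finset.Subset.antisymm
      · intro ν hν
        exact Finset.mem_Icc.mpr ⟨F.min'_le ν hν, F.le_max' ν hν⟩
      · intro ν hν
        obtain ⟨hl, hr⟩ := Finset.mem_Icc.mp hν
        have hνn : ν < n := lt_of_le_of_lt hr hBn
        refine Finset.mem_filter.mpr ⟨Finset.mem_range.mpr hνn, le_antisymm ?_ ?_⟩
        · rw [← hxA]
          exact hmono A ν hl hνn
        · rw [← hxB]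
          exact hmono ν B hr hBn
    have hcardF : F.card = B + 1 - A := by rw [hFeq, Nat.card_Icc]
    obtain ⟨hdA, hcA⟩ := iter_facts hdeg hreal A (le_of_lt hAn)
    have hA0 : derivative^[A] f ≠ 0 := fun h => by rw [h, natDegree_zero] at hdA; omega
    have hlt : B - A < (derivative^[A] f).rootMultiplicity y := by
      apply lt_rootMultiplicity_of_isRoot_iterate_derivative hA0
      intro m hm
      have hmem : A + m ∈ F := by
        rw [hFeq]
        exact Finset.mem_Icc.mpr ⟨Nat.le_add_right _ _, by omega⟩
      have hxm : x (A + m) = y := (Finset.mem_filter.mp hmem).2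
      have hAm : A + m < n := by omega
      have hev := (hroots (A + m) hAm).2
      rw [hxm] at hev
      show (derivative^[m] (derivative^[A] f)).eval y = 0
      rw [← Function.iterate_add_apply, add_comm]
      exact hev
    by_cases hk : 2 ≤ F.card
    · exact mult_down hdeg hreal A (by omega) y F.card hk (by omega)
    · have hc1 : F.card = 1 := by
        have := Finset.card_pos.mpr hFne
        omega
      rw [hc1]
      have hyroot : f.IsRoot y := by
        rw [← hxA]
        exact (hroots A hAn).1
      exact (rootMultiplicity_pos hf0).mpr hyroot
  have claim2 : ∑ y ∈ T, ((Finset.range n).filter fun ν => x ν = y).card = n := by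
    have h := Finset.card_eq_sum_card_image x (Finset.range n)
    rw [Finset.card_range] at h
    exact h.symm
  have hTsub : T ⊆ f.roots.toFinset := by
    intro y hy
    obtain ⟨ν, hν, rfl⟩ := Finset.mem_image.mp hy
    rw [Multiset.mem_toFinset, mem_roots']
    exact ⟨hf0, (hroots ν (Finset.mem_range.mp hν)).1⟩
  have hsum_all : ∑ y ∈ f.roots.toFinset, f.roots.count y = n := by
    rw [Multiset.toFinset_sum_count_eq, hreal]
  have hsumT_le : ∑ y ∈ T, f.roots.count y ≤ n := by
    rw [← hsum_all]
    exact Finset.sum_le_sum_of_subset hTsub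
  have hsumT_ge : n ≤ ∑ y ∈ T, f.roots.count y := by
    rw [← claim2]
    apply Finset.sum_le_sum
    intro y hy
    rw [count_roots]
    exact claim1 y hy
  have hTfull : f.roots.toFinset ⊆ T := by
    intro z hz
    by_contra hzT
    have hz' : z ∈ f.roots.toFinset \ T := Finset.mem_sdiff.mpr ⟨hz, hzT⟩
    have hsd : ∑ y ∈ f.roots.toFinset \ T, f.roots.count y = 0 := by
      have h : ∑ y ∈ f.roots.toFinset \ T, f.roots.count y + ∑ y ∈ T, f.roots.count y
          = ∑ y ∈ f.roots.toFinset, f.roots.count y := Finset.sum_sdiff hTsub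
      omega
    have hz0 := Finset.sum_eq_zero_iff.mp hsd z hz'
    have hzpos := Multiset.count_pos.mpr (Multiset.mem_toFinset.mp hz)
    omega
  -- sum of roots
  set b := x (n - 1) with hb'
  have hbroot := hroots (n - 1) (by omega)
  have sums : ∀ m, 1 ≤ m → m ≤ n → (derivative^[n - m] f).roots.sum = (m : ℝ) * b := by
    intro m hm
    induction m, hm using Nat.le_induction with
    | base =>
      intro _
      obtain ⟨hd1, hc1⟩ := iter_facts hdeg hreal (n - 1) (by omega)
      have he : n - (n - 1) = 1 := by omega
      rw [he] at hd1 hc1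
      have hne : derivative^[n - 1] f ≠ 0 := fun h => by rw [h, natDegree_zero] at hd1; omega
      have hmem : b ∈ (derivative^[n - 1] f).roots := mem_roots'.mpr ⟨hne, hbroot.2⟩
      obtain ⟨c, hc⟩ := Multiset.card_eq_one.mp hc1
      rw [hc] at hmem ⊢
      have : b = c := by simpa using hmem
      simp [← this]
    | succ m hm ih =>
      intro hmn
      obtain ⟨hdp, hcp⟩ := iter_facts hdeg hreal (n - (m + 1)) (by omega)
      have he : n - (n - (m + 1)) = m + 1 := by omega
      rw [he] at hdp hcp
      have hstep := step_sum hdp (by omega) hcp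
      have hder : derivative (derivative^[n - (m + 1)] f) = derivative^[n - m] f := by
        rw [show n - m = n - (m + 1) + 1 from by omega, Function.iterate_succ_apply']
      rw [hder, ih (by omega)] at hstep
      have hm0 : (m : ℝ) ≠ 0 := Nat.cast_ne_zero.mpr (by omega)
      have hcast : ((m + 1 - 1 : ℕ) : ℝ) = (m : ℝ) := by norm_num
      rw [hcast] at hstep
      apply mul_left_cancel₀ hm0
      push_cast at hstep ⊢
      linarith [hstep]
  have hsum : f.roots.sum = (n : ℝ) * b := by
    have h := sums n (by omega) le_rfl
    simpa using h
  have hge : ∀ r ∈ f.roots, b ≤ r := by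
    intro r hr
    have hrT : r ∈ T := hTfull (Multiset.mem_toFinset.mpr hr)
    obtain ⟨ν, hν, rfl⟩ := Finset.mem_image.mp hrT
    have hνn : ν < n := Finset.mem_range.mp hν
    exact hmono ν (n - 1) (by omega) (by omega)
  have hall : ∀ r ∈ f.roots, r = b := by
    intro r hr
    by_contra hne
    have hrb : b < r := lt_of_le_of_ne (hge r hr) (Ne.symm hne)
    obtain ⟨t, ht⟩ := Multiset.exists_cons_of_mem hr
    have hcardt : Multiset.card t = n - 1 := by
      rw [ht] at hreal
      simp at hreal
      omega
    have htes : ∀ z ∈ t, b ≤ z := fun z hz => hge z (by rw [ht]; exact Multiset.mem_cons_of_mem hz)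
    have hts := Multiset.card_nsmul_le_sum htes
    rw [hcardt, nsmul_eq_mul] at hts
    have hsum' : r + t.sum = (n : ℝ) * b := by
      rw [← hsum, ht, Multiset.sum_cons]
    have hcast : ((n - 1 : ℕ) : ℝ) = (n : ℝ) - 1 := by
      push_cast [Nat.cast_sub (by omega : 1 ≤ n)]
      ring
    rw [hcast] at hts
    nlinarith [hts, hsum', hrb]
  have hrepl : f.roots = Multiset.replicate n b := Multiset.eq_replicate.mpr ⟨hreal, hall⟩
  have hsplit : f.Splits := splits_iff_card_roots.mpr (by rw [hreal, hdeg])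
  have hprod := hsplit.eq_prod_roots
  refine ⟨f.leadingCoeff, b, ?_⟩
  conv_lhs => rw [hprod]
  rw [hrepl, Multiset.map_replicate, Multiset.prod_replicate]
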